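/- Let k be an algebraically closed field of characteristic zero and G a finite group of order n. Then every 2-cocycle α on G with values in kˣ is cohomologous to a 2-cocycle valued in n-th roots of unity: there exists γ : G → kˣ such that (α(g,h)·γ(g)·γ(h)·γ(g·h)⁻¹)^n = 1 for all g,h ∈ G. (Equivalently, the canonical map H²(G,μ_n) → H²(G,kˣ) is surjective, where μ_n ⊂ kˣ is the subgroup of n-th roots of unity.) -/

import Mathlib

/-- Over an algebraically closed field `k` of characteristic zero, every 2-cocycle `α`
on a finite group `G` of order `n` is cohomologous to a 2-cocycle valued in `n`-th roots
of unity: the canonical map `H²(G, μ_n) → H²(G, kˣ)` is surjective. -/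
theorem cocycle_cohomologous_to_roots_of_unity
    {k : Type*} [Field k] [IsAlgClosed k] [CharZero k]
    {G : Type*} [Group G] [Fintype G]
    (α : G → G → kˣ)
    (hα : ∀ g h l : G, α g h * α (g * h) l = α g (h * l) * α h l) :
    ∃ γ : G → kˣ, ∀ g h : G,
      (α g h * γ g * γ h * (γ (g * h))⁻¹) ^ (Fintype.card G) = 1 := by
  classical
  set n := Fintype.card G with hn
  have hnpos : 0 < n := Fintype.card_pos
  set β : G → kˣ := fun g => ∏ l : G, α g l with hβ
  have key : ∀ g h : G, (α g h) ^ n * β (g * h) = β g * β h := by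
    intro g h
    have : ∏ l : G, (α g h * α (g * h) l) = ∏ l : G, (α g (h * l) * α h l) :=
      Finset.prod_congr rfl fun l _ => hα g h l
    rw [Finset.prod_mul_distrib, Finset.prod_mul_distrib, Finset.prod_const,
      Finset.card_univ] at this
    have hr : ∏ l : G, α g (h * l) = β g := by
      simp only [hβ]
      exact Fintype.prod_equiv (Equiv.mulLeft h) _ _ (fun l => rfl)
    rw [hr] at this
    exact this
  -- choose γ g with γ g ^ n = (β g)⁻¹
  have hroot : ∀ g : G, ∃ c : kˣ, c ^ n = (β g)⁻¹ := by
    intro g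
    obtain ⟨z, hz⟩ := IsAlgClosed.exists_pow_nat_eq (((β g)⁻¹ : kˣ) : k) hnpos
    have hz0 : z ≠ 0 := by
      intro h
      rw [h, zero_pow hnpos.ne'] at hz
      exact (Units.ne_zero _) hz.symm
    refine ⟨Units.mk0 z hz0, ?_⟩
    ext
    simpa [Units.val_inv_eq_inv_val] using hz
  choose γ hγ using hroot
  refine ⟨γ, fun g h => ?_⟩
  have : (α g h * γ g * γ h * (γ (g * h))⁻¹) ^ n
      = (α g h) ^ n * (β g)⁻¹ * (β h)⁻¹ * ((β (g * h))⁻¹)⁻¹ := by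
    rw [mul_pow, mul_pow, mul_pow, inv_pow, hγ, hγ, hγ]
  rw [this, inv_inv]
  have := key g h
  rw [mul_right_comm, mul_right_comm (α g h ^ n), this, mul_assoc, ← mul_inv, mul_inv_cancel]
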